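/- Let (U₁, U₂) be a type II pair: upper triangular matrices with internal relations αᵢγᵢ = γᵢαᵢ and αᵢβᵢ = βᵢγᵢ, and mutual relations α₁α₂ = qα₂α₁, α₁γ₂ = q⁻¹γ₂α₁, α₂γ₁ = qγ₁α₂, γ₁γ₂ = qγ₂γ₁, α₁β₂ = qβ₂γ₁, β₁γ₂ = qα₂β₁. Then for all integers n, m, the entries of U₁^n U₂^m satisfy α(n,m)γ(n,m) = γ(n,m)α(n,m) and α(n,m)β(n,m) = β(n,m)γ(n,m). -/

import Mathlib

section Helpers

variable {k A : Type*} [Field k] [Ring A] [Algebra k A]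

lemma qcomm_smul (c : k) (hc : c ≠ 0) (u w : Aˣ) (b : A)
    (h : (u : A) * b = c • (b * (w : A))) :
    ∀ n : ℤ, ((u ^ n : Aˣ) : A) * b = c ^ n • (b * ((w ^ n : Aˣ) : A)) := by
  have hinv : ((u⁻¹ : Aˣ) : A) * b = c⁻¹ • (b * ((w⁻¹ : Aˣ) : A)) := by
    have h1 : b = c • (((u⁻¹ : Aˣ) : A) * (b * (w : A))) :=
      calc b = ((u⁻¹ : Aˣ) : A) * ((u : A) * b) := by
              rw [← mul_assoc, Units.inv_mul, one_mul]
        _ = c • (((u⁻¹ : Aˣ) : A) * (b * (w : A))) := by rw [h, mul_smul_comm]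
    calc ((u⁻¹ : Aˣ) : A) * b
        = ((u⁻¹ : Aˣ) : A) * (b * (w : A)) * ((w⁻¹ : Aˣ) : A) := by
          rw [mul_assoc, mul_assoc, Units.mul_inv, mul_one]
      _ = c⁻¹ • (b * ((w⁻¹ : Aˣ) : A)) := by
          conv_rhs => rw [h1]
          rw [smul_mul_assoc, smul_smul, inv_mul_cancel₀ hc, one_smul]
  intro n
  induction n using Int.induction_on with
  | zero => simp
  | succ n ih =>
      have h2 : ((u ^ ((n : ℤ) + 1) : Aˣ) : A) = ((u ^ (n : ℤ) : Aˣ) : A) * (u : A) := by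
        rw [← Units.val_mul, ← zpow_add_one]
      rw [h2, mul_assoc, h, mul_smul_comm, ← mul_assoc, ih, smul_mul_assoc, smul_smul,
        mul_assoc, ← Units.val_mul, ← zpow_add_one, zpow_add_one₀ hc, mul_comm]
  | pred n ih =>
      have h2 : ((u ^ (-(n : ℤ) - 1) : Aˣ) : A) = ((u ^ (-(n : ℤ)) : Aˣ) : A) * ((u⁻¹ : Aˣ) : A) := by
        rw [← Units.val_mul, ← zpow_sub_one]
      rw [h2, mul_assoc, hinv, mul_smul_comm, ← mul_assoc, ih, smul_mul_assoc, smul_smul,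
        mul_assoc, ← Units.val_mul, ← zpow_sub_one, zpow_sub_one₀ hc, mul_comm]

lemma qcomm_one' {A : Type*} [Ring A] (u w : Aˣ) (b : A) (h : (u : A) * b = b * (w : A)) :
    ∀ n : ℤ, ((u ^ n : Aˣ) : A) * b = b * ((w ^ n : Aˣ) : A) := by
  have hinv : ((u⁻¹ : Aˣ) : A) * b = b * ((w⁻¹ : Aˣ) : A) := by
    calc ((u⁻¹ : Aˣ) : A) * b
        = ((u⁻¹ : Aˣ) : A) * (b * (w : A)) * ((w⁻¹ : Aˣ) : A) := by
          rw [mul_assoc, mul_assoc, Units.mul_inv, mul_one]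
      _ = b * ((w⁻¹ : Aˣ) : A) := by
          rw [← h, ← mul_assoc, Units.inv_mul, one_mul]
  intro n
  induction n using Int.induction_on with
  | zero => simp
  | succ n ih =>
      have h2 : ((u ^ ((n : ℤ) + 1) : Aˣ) : A) = ((u ^ (n : ℤ) : Aˣ) : A) * (u : A) := by
        rw [← Units.val_mul, ← zpow_add_one]
      rw [h2, mul_assoc, h, ← mul_assoc, ih, mul_assoc, ← Units.val_mul, ← zpow_add_one]
  | pred n ih =>
      have h2 : ((u ^ (-(n : ℤ) - 1) : Aˣ) : A) = ((u ^ (-(n : ℤ)) : Aˣ) : A) * ((u⁻¹ : Aˣ) : A) := by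
        rw [← Units.val_mul, ← zpow_sub_one]
      rw [h2, mul_assoc, hinv, ← mul_assoc, ih, mul_assoc, ← Units.val_mul, ← zpow_sub_one]

lemma comm2 {A : Type*} [Ring A] (u v : Aˣ) (h : (u : A) * (v : A) = (v : A) * (u : A)) :
    ∀ n m : ℤ, ((u ^ n : Aˣ) : A) * ((v ^ m : Aˣ) : A)
      = ((v ^ m : Aˣ) : A) * ((u ^ n : Aˣ) : A) := by
  intro n m
  have h1 : ((u ^ n : Aˣ) : A) * (v : A) = (v : A) * ((u ^ n : Aˣ) : A) :=
    qcomm_one' u u (v : A) h n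
  exact (qcomm_one' v v ((u ^ n : Aˣ) : A) h1.symm m).symm

lemma qcomm2 (c : k) (hc : c ≠ 0) (u v : Aˣ)
    (h : (u : A) * (v : A) = c • ((v : A) * (u : A))) :
    ∀ n m : ℤ, ((u ^ n : Aˣ) : A) * ((v ^ m : Aˣ) : A)
      = c ^ (n * m) • (((v ^ m : Aˣ) : A) * ((u ^ n : Aˣ) : A)) := by
  intro n m
  have h1 : ∀ j : ℤ, ((u ^ j : Aˣ) : A) * (v : A) = c ^ j • ((v : A) * ((u ^ j : Aˣ) : A)) :=
    qcomm_smul c hc u u (v : A) h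
  have h2 : (v : A) * ((u ^ n : Aˣ) : A) = (c ^ n)⁻¹ • (((u ^ n : Aˣ) : A) * (v : A)) := by
    rw [h1 n, smul_smul, inv_mul_cancel₀ (zpow_ne_zero _ hc), one_smul]
  have h3 := qcomm_smul ((c ^ n)⁻¹) (inv_ne_zero (zpow_ne_zero _ hc)) v v
      (((u ^ n : Aˣ) : A)) h2 m
  rw [h3, smul_smul]
  have hs : c ^ (n * m) * ((c ^ n)⁻¹) ^ m = 1 := by
    rw [← zpow_neg, ← zpow_mul, ← zpow_add₀ hc]
    have : n * m + -n * m = 0 := by ring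
    rw [this, zpow_zero]
  rw [hs, one_smul]

lemma mvs {x y w : A} {c : k} (h : x * y = c • w) (z : A) : x * (y * z) = c • (w * z) := by
  rw [← mul_assoc, h, smul_mul_assoc]

lemma mvp {A : Type*} [Ring A] {x y w : A} (h : x * y = w) (z : A) : x * (y * z) = w * z := by
  rw [← mul_assoc, h]

lemma mergeU {A : Type*} [Ring A] (u : Aˣ) (a b : ℤ) :
    ((u ^ a : Aˣ) : A) * ((u ^ b : Aˣ) : A) = ((u ^ (a + b) : Aˣ) : A) := by
  rw [← Units.val_mul, ← zpow_add]

lemma mergeL {A : Type*} [Ring A] (u : Aˣ) (a b : ℤ) (z : A) :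
    ((u ^ a : Aˣ) : A) * (((u ^ b : Aˣ) : A) * z) = ((u ^ (a + b) : Aˣ) : A) * z := by
  rw [← mul_assoc, mergeU]

lemma mergeU1 {A : Type*} [Ring A] (u : Aˣ) (a : ℤ) :
    ((u ^ a : Aˣ) : A) * (u : A) = ((u ^ (a + 1) : Aˣ) : A) := by
  rw [← Units.val_mul, ← zpow_add_one]

lemma mergeUinv {A : Type*} [Ring A] (u : Aˣ) (a : ℤ) :
    ((u ^ a : Aˣ) : A) * ((u⁻¹ : Aˣ) : A) = ((u ^ (a - 1) : Aˣ) : A) := by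
  rw [← Units.val_mul, ← zpow_sub_one]

lemma tri_pow {A : Type*} [Ring A] (α γ : Aˣ) (β : A)
    (hB : (α : A) * β = β * (γ : A))
    (V : (Matrix (Fin 2) (Fin 2) A)ˣ)
    (hV : V.val = !![(α : A), β; 0, (γ : A)]) :
    ∀ n : ℤ, (V ^ n).val
      = !![((α ^ n : Aˣ) : A), n • (β * ((γ ^ (n - 1) : Aˣ) : A)); 0, ((γ ^ n : Aˣ) : A)] := by
  have hVinv : (V⁻¹).val
      = !![((α⁻¹ : Aˣ) : A), -(((α⁻¹ : Aˣ) : A) * β * ((γ⁻¹ : Aˣ) : A)); 0, ((γ⁻¹ : Aˣ) : A)] := by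
    set W : Matrix (Fin 2) (Fin 2) A :=
      !![((α⁻¹ : Aˣ) : A), -(((α⁻¹ : Aˣ) : A) * β * ((γ⁻¹ : Aˣ) : A)); 0, ((γ⁻¹ : Aˣ) : A)] with hW
    have h1 : V.val * W = 1 := by
      rw [hV, hW, Matrix.mul_fin_two, Matrix.one_fin_two]
      ext i j
      fin_cases i <;> fin_cases j <;> simp [mul_neg, ← mul_assoc]
    have h2 : (V⁻¹).val = (V⁻¹).val * (V.val * W) := by rw [h1, mul_one]
    rw [h2, ← mul_assoc, ← Units.val_mul, inv_mul_cancel, Units.val_one, one_mul]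
  intro n
  induction n using Int.induction_on with
  | zero => simp [Matrix.one_fin_two]
  | succ n ih =>
      have h2 : (V ^ ((n : ℤ) + 1)).val = (V ^ (n : ℤ)).val * V.val := by
        rw [← Units.val_mul, ← zpow_add_one]
      rw [h2, ih, hV, Matrix.mul_fin_two]
      ext i j
      fin_cases i <;> fin_cases j
      · simp [mergeU1, -zpow_natCast, -Units.val_pow_eq_pow_val]
      · show ((α ^ (n:ℤ) : Aˣ) : A) * β + (n:ℤ) • (β * ((γ ^ ((n:ℤ) - 1) : Aˣ) : A)) * (γ : A)
          = ((n:ℤ) + 1) • (β * ((γ ^ ((n:ℤ) + 1 - 1) : Aˣ) : A))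
        rw [qcomm_one' α γ β hB n, smul_mul_assoc, mul_assoc, mergeU1, sub_add_cancel,
          add_sub_cancel_right, add_smul, one_smul, add_comm]
      · simp
      · simp [mergeU1, -zpow_natCast, -Units.val_pow_eq_pow_val]
  | pred n ih =>
      have h2 : (V ^ (-(n : ℤ) - 1)).val = (V ^ (-(n : ℤ))).val * (V⁻¹).val := by
        rw [← Units.val_mul, ← zpow_sub_one]
      rw [h2, ih, hVinv, Matrix.mul_fin_two]
      ext i j
      fin_cases i <;> fin_cases j
      · simp [mergeUinv, -zpow_natCast, -Units.val_pow_eq_pow_val, -zpow_neg]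
      · show ((α ^ (-(n:ℤ)) : Aˣ) : A) * -(((α⁻¹ : Aˣ) : A) * β * ((γ⁻¹ : Aˣ) : A))
            + (-(n:ℤ)) • (β * ((γ ^ (-(n:ℤ) - 1) : Aˣ) : A)) * ((γ⁻¹ : Aˣ) : A)
          = (-(n:ℤ) - 1) • (β * ((γ ^ (-(n:ℤ) - 1 - 1) : Aˣ) : A))
        rw [mul_neg, ← mul_assoc, ← mul_assoc, mergeUinv, qcomm_one' α γ β hB (-(n:ℤ) - 1),
          mul_assoc, mergeUinv, smul_mul_assoc, mul_assoc, mergeUinv]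
        module
      · simp
      · simp [mergeUinv, -zpow_natCast, -Units.val_pow_eq_pow_val, -zpow_neg]

end Helpers

/-- Type II pairs: the entries of `U₁ⁿ U₂ᵐ` satisfy
`α(n,m) γ(n,m) = γ(n,m) α(n,m)` and `α(n,m) β(n,m) = β(n,m) γ(n,m)`. -/
theorem typeII_internal_relations {k A : Type*} [Field k] [CharZero k] [Ring A] [Algebra k A]
    (q : k) (hq0 : q ≠ 0) (hq1 : q ≠ 1)
    (α₁ γ₁ α₂ γ₂ : Aˣ) (β₁ β₂ : A)
    -- internal relations (ID2) and (IND1)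
    (hI1 : (α₁ : A) * (γ₁ : A) = (γ₁ : A) * (α₁ : A))
    (hI2 : (α₂ : A) * (γ₂ : A) = (γ₂ : A) * (α₂ : A))
    (hB1 : (α₁ : A) * β₁ = β₁ * (γ₁ : A)) (hB2 : (α₂ : A) * β₂ = β₂ * (γ₂ : A))
    -- mutual relations (MD2) and (MND)
    (hAA : (α₁ : A) * (α₂ : A) = q • ((α₂ : A) * (α₁ : A)))
    (hAC : (α₁ : A) * (γ₂ : A) = q⁻¹ • ((γ₂ : A) * (α₁ : A)))
    (hCA : (α₂ : A) * (γ₁ : A) = q • ((γ₁ : A) * (α₂ : A)))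
    (hCC : (γ₁ : A) * (γ₂ : A) = q • ((γ₂ : A) * (γ₁ : A)))
    (hAB : (α₁ : A) * β₂ = q • (β₂ * (γ₁ : A)))
    (hBC : β₁ * (γ₂ : A) = q • ((α₂ : A) * β₁))
    (V₁ V₂ : (Matrix (Fin 2) (Fin 2) A)ˣ)
    (hV₁ : V₁.val = !![(α₁ : A), β₁; 0, (γ₁ : A)])
    (hV₂ : V₂.val = !![(α₂ : A), β₂; 0, (γ₂ : A)]) :
    ∀ n m : ℤ,
      (V₁ ^ n * V₂ ^ m).val 0 0 *
        (V₁ ^ n * V₂ ^ m).val 1 1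
        = (V₁ ^ n * V₂ ^ m).val 1 1 *
          (V₁ ^ n * V₂ ^ m).val 0 0 ∧
      (V₁ ^ n * V₂ ^ m).val 0 0 *
        (V₁ ^ n * V₂ ^ m).val 0 1
        = (V₁ ^ n * V₂ ^ m).val 0 1 *
          (V₁ ^ n * V₂ ^ m).val 1 1 := by
  intro n m
  have hq0' : q⁻¹ ≠ 0 := inv_ne_zero hq0
  -- reversed basic relations
  have hAA' : (α₂ : A) * (α₁ : A) = q⁻¹ • ((α₁ : A) * (α₂ : A)) := by
    rw [hAA, smul_smul, inv_mul_cancel₀ hq0, one_smul]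
  have hCC' : (γ₂ : A) * (γ₁ : A) = q⁻¹ • ((γ₁ : A) * (γ₂ : A)) := by
    rw [hCC, smul_smul, inv_mul_cancel₀ hq0, one_smul]
  have hBC' : (α₂ : A) * β₁ = q⁻¹ • (β₁ * (γ₂ : A)) := by
    rw [hBC, smul_smul, inv_mul_cancel₀ hq0, one_smul]
  -- power relations
  have r1 := qcomm2 (q⁻¹) hq0' α₂ α₁ hAA' m n
  have r2 := qcomm_one' α₂ γ₂ β₂ hB2 m
  have r3 := qcomm_smul q hq0 α₁ γ₁ β₂ hAB n
  have r4 := qcomm_one' α₁ γ₁ β₁ hB1 n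
  have r5 := qcomm_smul (q⁻¹) hq0' α₂ γ₂ β₁ hBC' m
  have r6 := qcomm2 (q⁻¹) hq0' γ₂ γ₁ hCC' (m - 1) n
  have r7 := qcomm2 (q⁻¹) hq0' γ₂ γ₁ hCC' m n
  have r8 := qcomm2 (q⁻¹) hq0' γ₂ γ₁ hCC' m (n - 1)
  have e1 := qcomm2 q hq0 α₂ γ₁ hCA m n
  have e2 := qcomm2 (q⁻¹) hq0' α₁ γ₂ hAC n m
  have e3 := comm2 α₂ γ₂ hI2 m m
  have e4 := comm2 α₁ γ₁ hI1 n n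
  rw [Units.val_mul, tri_pow α₁ γ₁ β₁ hB1 V₁ hV₁ n, tri_pow α₂ γ₂ β₂ hB2 V₂ hV₂ m,
    Matrix.mul_fin_two]
  simp only [Matrix.of_apply, Matrix.cons_val', Matrix.cons_val_zero, Matrix.cons_val_one, Matrix.head_cons,
    Matrix.empty_val', Matrix.cons_val_fin_one, Matrix.head_fin_const, mul_zero, zero_mul,
    add_zero, zero_add, smul_zero, mul_smul_comm, smul_mul_assoc]
  constructor
  · rw [mul_assoc, mul_assoc, mvs e1, mul_smul_comm, mul_assoc, e3, mvp e4, mul_assoc,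
      mvs e2, mul_smul_comm, smul_smul, mul_assoc]
    have hs1 : q ^ (m * n) * (q⁻¹) ^ (n * m) = 1 := by
      rw [inv_zpow, ← zpow_neg, ← zpow_add₀ hq0, show m * n + -(n * m) = 0 from by ring,
        zpow_zero]
    rw [hs1, one_smul]
  · have r3' := qcomm_smul q hq0 α₁ γ₁ β₂ hAB (n + n)
    have hT1 : (((α₁ ^ n : Aˣ) : A) * ((α₂ ^ m : Aˣ) : A))
          * (((α₁ ^ n : Aˣ) : A) * (β₂ * ((γ₂ ^ (m - 1) : Aˣ) : A)))
        = (((α₁ ^ n : Aˣ) : A) * (β₂ * ((γ₂ ^ (m - 1) : Aˣ) : A)))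
          * (((γ₁ ^ n : Aˣ) : A) * ((γ₂ ^ m : Aˣ) : A)) := by
      conv_lhs => rw [mul_assoc, mvs r1]
      simp only [mul_smul_comm, smul_mul_assoc, smul_smul, mul_assoc]
      conv_lhs => rw [mvp r2]
      simp only [mul_smul_comm, smul_mul_assoc, smul_smul, mul_assoc, mergeU, mergeL]
      conv_lhs => rw [mvs r3']
      simp only [mul_smul_comm, smul_mul_assoc, smul_smul, mul_assoc, mergeU, mergeL]
      conv_rhs => rw [mvs r6]
      simp only [mul_smul_comm, smul_mul_assoc, smul_smul, mul_assoc, mergeU, mergeL]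
      conv_rhs => rw [mvs r3]
      simp only [mul_smul_comm, smul_mul_assoc, smul_smul, mul_assoc, mergeU, mergeL]
      rw [show m + (m - 1) = (m - 1) + m from by ring]
      congr 1
      simp only [inv_zpow, ← zpow_neg, ← zpow_add₀ hq0]
      congr 1
      ring
    have hT2 : (((α₁ ^ n : Aˣ) : A) * ((α₂ ^ m : Aˣ) : A))
          * ((β₁ * ((γ₁ ^ (n - 1) : Aˣ) : A)) * ((γ₂ ^ m : Aˣ) : A))
        = ((β₁ * ((γ₁ ^ (n - 1) : Aˣ) : A)) * ((γ₂ ^ m : Aˣ) : A))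
          * (((γ₁ ^ n : Aˣ) : A) * ((γ₂ ^ m : Aˣ) : A)) := by
      simp only [mul_assoc]
      conv_lhs => rw [mvs r5]
      simp only [mul_smul_comm, smul_mul_assoc, smul_smul, mul_assoc, mergeU, mergeL]
      conv_lhs => rw [mvs r8]
      simp only [mul_smul_comm, smul_mul_assoc, smul_smul, mul_assoc, mergeU, mergeL]
      conv_lhs => rw [mvp r4]
      simp only [mul_smul_comm, smul_mul_assoc, smul_smul, mul_assoc, mergeU, mergeL]
      conv_rhs => rw [mvs r7]
      simp only [mul_smul_comm, smul_mul_assoc, smul_smul, mul_assoc, mergeU, mergeL]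
      rw [show n + (n - 1) = (n - 1) + n from by ring]
      congr 1
      simp only [inv_zpow, ← zpow_neg, ← zpow_add₀ hq0]
      congr 1
      ring
    simp only [mul_smul_comm, smul_mul_assoc, mul_add, add_mul]
    rw [hT1, hT2]
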